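/- Let G be a finite simple graph with n vertices admitting a hamiltonian path v_1, v_2, …, v_n such that for every i > 2 the vertex v_i has at least one neighbour in {v_1, v_2, …, v_{i-2}} (so v_i has at least two neighbours among v_1, …, v_{i-1}, including v_{i-1}). Then the chromatic polynomial of G has no real root in the open interval (1, 2). -/

import Mathlib

set_option maxHeartbeats 4000000

/-- The number of proper colorings of `G` with a palette of `k` colors. -/
noncomputable def numColorings {V : Type} [Fintype V] (G : SimpleGraph V) (k : ℕ) : ℕ :=
  Nat.card {f : V → Fin k // ∀ u v, G.Adj u v → f u ≠ f v}

/-- `P` is the chromatic polynomial of `G`: for every natural number `k`, evaluating `P`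
at `k` gives the number of proper `k`-colorings of `G`. -/
def IsChromaticPolynomial {V : Type} [Fintype V] (G : SimpleGraph V) (P : Polynomial ℝ) : Prop :=
  ∀ k : ℕ, P.eval (k : ℝ) = numColorings G k

namespace DongKoh
open Finset
open scoped Classical

noncomputable def pcs {m : ℕ} (G : SimpleGraph (Fin m)) (k : ℕ) : Finset (Fin m → Fin k) :=
  Finset.univ.filter fun f => ∀ i j, G.Adj i j → f i ≠ f j

lemma mem_pcs {m : ℕ} {G : SimpleGraph (Fin m)} {k : ℕ} {f : Fin m → Fin k} :
    f ∈ pcs G k ↔ ∀ i j, G.Adj i j → f i ≠ f j := by simp [pcs]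

noncomputable def cnt {m : ℕ} (G : SimpleGraph (Fin m)) (k : ℕ) : ℕ := (pcs G k).card

lemma cnt_eq_nat_card {m : ℕ} (G : SimpleGraph (Fin m)) (k : ℕ) :
    cnt G k = Nat.card {f : Fin m → Fin k // ∀ i j, G.Adj i j → f i ≠ f j} := by
  rw [Nat.card_eq_fintype_card, Fintype.card_subtype, cnt, pcs]

/-- merge the last vertex of `G` into `t`. -/
def mrg {m : ℕ} (t : Fin m) (G : SimpleGraph (Fin (m+1))) : SimpleGraph (Fin m) where
  Adj i j := i ≠ j ∧ (G.Adj i.castSucc j.castSucc ∨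
    (G.Adj i.castSucc (Fin.last m) ∧ j = t) ∨ (G.Adj j.castSucc (Fin.last m) ∧ i = t))
  symm := by
    constructor
    rintro i j ⟨hne, h⟩
    refine ⟨hne.symm, ?_⟩
    rcases h with h | ⟨h, rfl⟩ | ⟨h, rfl⟩
    · exact Or.inl h.symm
    · exact Or.inr (Or.inr ⟨h, rfl⟩)
    · exact Or.inr (Or.inl ⟨h, rfl⟩)
  loopless := ⟨fun i h => h.1 rfl⟩

lemma comap_le_mrg {m : ℕ} (t : Fin m) (G : SimpleGraph (Fin (m+1))) :
    G.comap Fin.castSucc ≤ mrg t G := by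
  intro i j h
  have h' : G.Adj i.castSucc j.castSucc := h
  exact ⟨fun e => G.loopless.irrefl _ (e ▸ h'), Or.inl h'⟩

lemma mrg_count {m : ℕ} (t : Fin m) (G : SimpleGraph (Fin (m+1)))
    (hnt : ¬ G.Adj (Fin.last m) t.castSucc) (k : ℕ) :
    ((pcs G k).filter fun f => f (Fin.last m) = f t.castSucc).card = cnt (mrg t G) k := by
  apply Finset.card_nbij' (fun f => f ∘ Fin.castSucc) (fun g => Fin.snoc g (g t))
  · intro f hf
    rw [Finset.mem_coe, Finset.mem_filter] at hf
    obtain ⟨hf, heq⟩ := hf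
    rw [Finset.mem_coe]
    rw [mem_pcs] at hf ⊢
    rintro i j ⟨hne, hadj | ⟨hadj, rfl⟩ | ⟨hadj, rfl⟩⟩
    · exact hf _ _ hadj
    · simpa [heq] using hf _ _ hadj
    · intro e; exact hf _ _ hadj (by simpa [heq] using e.symm)
  · intro g hg
    rw [Finset.mem_coe, mem_pcs] at hg
    rw [Finset.mem_coe, Finset.mem_filter, mem_pcs]
    constructor
    · intro x y hxy
      induction x using Fin.lastCases with
      | last =>
        induction y using Fin.lastCases with
        | last => exact absurd hxy (G.loopless.irrefl _)
        | cast w =>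
          have hwt : w ≠ t := fun e => hnt (e ▸ hxy)
          have : (mrg t G).Adj t w := ⟨fun e => hwt e.symm, Or.inr (Or.inr ⟨hxy.symm, rfl⟩)⟩
          simpa [Fin.snoc_castSucc] using hg _ _ this
      | cast w =>
        induction y using Fin.lastCases with
        | last =>
          have hwt : w ≠ t := fun e => hnt (e ▸ hxy.symm)
          have : (mrg t G).Adj w t := ⟨hwt, Or.inr (Or.inl ⟨hxy, rfl⟩)⟩
          simpa [Fin.snoc_castSucc] using hg _ _ this
        | cast w' =>
          have hne : w ≠ w' := fun e => G.loopless.irrefl _ (e ▸ hxy)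
          have : (mrg t G).Adj w w' := ⟨hne, Or.inl hxy⟩
          simpa [Fin.snoc_castSucc] using hg _ _ this
    · simp [Fin.snoc_castSucc, Fin.snoc_last]
  · intro f hf
    rw [Finset.mem_coe, Finset.mem_filter] at hf
    funext x
    induction x using Fin.lastCases with
    | last => simp [Fin.snoc_last, Function.comp, hf.2]
    | cast w => simp [Fin.snoc_castSucc, Function.comp]
  · intro g hg
    funext w
    simp [Fin.snoc_castSucc, Function.comp]

lemma del_count {m : ℕ} (G : SimpleGraph (Fin (m+1))) (c : Fin (m+1))
    (hadj : G.Adj (Fin.last m) c) (k : ℕ) :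
    cnt (G.deleteEdges {s(Fin.last m, c)}) k
      = cnt G k + ((pcs (G.deleteEdges {s(Fin.last m, c)}) k).filter
          fun f => f (Fin.last m) = f c).card := by
  set D := G.deleteEdges {s(Fin.last m, c)} with hD
  have key : (pcs D k).filter (fun f => ¬ f (Fin.last m) = f c) = pcs G k := by
    ext f
    simp only [Finset.mem_filter, mem_pcs]
    constructor
    · rintro ⟨hf, hne⟩ i j hij
      by_cases h : s(i, j) = s(Fin.last m, c)
      · rw [Sym2.eq_iff] at h
        rcases h with ⟨rfl, rfl⟩ | ⟨rfl, rfl⟩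
        · exact hne
        · exact fun e => hne e.symm
      · exact hf i j (by simp [hD, SimpleGraph.deleteEdges_adj, hij, h])
    · intro hf
      refine ⟨fun i j hij => hf i j ?_, hf _ _ hadj⟩
      exact (SimpleGraph.deleteEdges_adj.mp hij).1
  have := Finset.card_filter_add_card_filter_not
    (s := pcs D k) (p := fun f => f (Fin.last m) = f c)
  rw [key] at this
  simp only [cnt]
  rw [← this, Nat.add_comm]

lemma ext_count {m : ℕ} (G : SimpleGraph (Fin (m+1))) (a b : Fin m)
    (hnbr : ∀ w, G.Adj (Fin.last m) w ↔ (w = a.castSucc ∨ w = b.castSucc)) (k : ℕ) :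
    cnt G k + 2 * cnt (G.comap Fin.castSucc) k
      = k * cnt (G.comap Fin.castSucc) k
        + ((pcs (G.comap Fin.castSucc) k).filter fun g => g a = g b).card := by
  set H := G.comap Fin.castSucc with hH
  have hres : ∀ f ∈ pcs G k, (f ∘ Fin.castSucc) ∈ pcs H k := by
    intro f hf
    rw [mem_pcs] at hf ⊢
    intro i j hij
    exact hf _ _ hij
  have hmain : cnt G k = ∑ g ∈ pcs H k,
      ((pcs G k).filter fun f => f ∘ Fin.castSucc = g).card :=
    Finset.card_eq_sum_card_fiberwise hres
  have hfiber : ∀ g ∈ pcs H k,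
      ((pcs G k).filter fun f => f ∘ Fin.castSucc = g).card + 2
        = if g a = g b then k + 1 else k := by
    intro g hg
    rw [mem_pcs] at hg
    have hcard : ((pcs G k).filter fun f => f ∘ Fin.castSucc = g).card
        = (Finset.univ.filter fun c : Fin k => ¬(c = g a ∨ c = g b)).card := by
      apply Finset.card_nbij' (fun f => f (Fin.last m)) (fun c => Fin.snoc g c)
      · intro f hf
        rw [Finset.mem_coe, Finset.mem_filter] at hf
        obtain ⟨hf, heq⟩ := hf
        rw [mem_pcs] at hf
        simp only [Finset.mem_coe, Finset.mem_filter, Finset.mem_univ, true_and]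
        push_neg
        constructor
        · have := hf _ _ ((hnbr a.castSucc).mpr (Or.inl rfl))
          simpa [← heq] using this
        · have := hf _ _ ((hnbr b.castSucc).mpr (Or.inr rfl))
          simpa [← heq] using this
      · intro c hc
        simp only [Finset.mem_coe, Finset.mem_filter, Finset.mem_univ, true_and] at hc
        push_neg at hc
        rw [Finset.mem_coe, Finset.mem_filter, mem_pcs]
        refine ⟨?_, by funext w; simp [Fin.snoc_castSucc]⟩
        intro x y hxy
        induction x using Fin.lastCases with
        | last =>
          induction y using Fin.lastCases with
          | last => exact absurd hxy (G.loopless.irrefl _)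
          | cast w =>
            rcases (hnbr _).mp hxy with h | h <;>
              [rw [Fin.castSucc_injective _ h]; rw [Fin.castSucc_injective _ h]] <;>
              simp [Fin.snoc_castSucc, Fin.snoc_last, hc.1, hc.2]
        | cast w =>
          induction y using Fin.lastCases with
          | last =>
            rcases (hnbr _).mp hxy.symm with h | h <;>
              [rw [Fin.castSucc_injective _ h]; rw [Fin.castSucc_injective _ h]] <;>
              simp [Fin.snoc_castSucc, Fin.snoc_last] <;> [exact Ne.symm hc.1; exact Ne.symm hc.2]
          | cast w' =>
            have : H.Adj w w' := hxy
            simpa [Fin.snoc_castSucc] using hg _ _ this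
      · intro f hf
        rw [Finset.mem_coe, Finset.mem_filter] at hf
        funext x
        induction x using Fin.lastCases with
        | last => simp [Fin.snoc_last]
        | cast w =>
          have := congrFun hf.2 w
          simpa [Fin.snoc_castSucc] using this.symm
      · intro c hc
        simp [Fin.snoc_last]
    have hcompl : (Finset.univ.filter fun c : Fin k => (c = g a ∨ c = g b)).card
        = if g a = g b then 1 else 2 := by
      have : (Finset.univ.filter fun c : Fin k => (c = g a ∨ c = g b))
          = {g a, g b} := by
        ext c; simp [Finset.mem_insert]
      rw [this]
      split_ifs with h
      · rw [h]; simp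
      · rw [Finset.card_pair h]
    have htot := Finset.card_filter_add_card_filter_not
      (s := (Finset.univ : Finset (Fin k))) (p := fun c => (c = g a ∨ c = g b))
    rw [hcompl, Finset.card_univ, Fintype.card_fin] at htot
    rw [hcard]
    split_ifs with h <;> simp [h] at htot ⊢ <;> omega
  have h1 : cnt G k + 2 * cnt H k
      = ∑ g ∈ pcs H k, (((pcs G k).filter fun f => f ∘ Fin.castSucc = g).card + 2) := by
    rw [Finset.sum_add_distrib, ← hmain, Finset.sum_const, cnt, smul_eq_mul]
    simp [cnt]; ring
  rw [h1, Finset.sum_congr rfl hfiber]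
  have h2 : ∑ g ∈ pcs H k, (if g a = g b then k + 1 else k)
      = k * cnt H k + ((pcs H k).filter fun g => g a = g b).card := by
    have h3 : ∀ g : Fin m → Fin k, (if g a = g b then k + 1 else k)
        = k + (if g a = g b then 1 else 0) := by
      intro g; split_ifs <;> ring
    simp_rw [h3]
    rw [Finset.sum_add_distrib, Finset.sum_const, smul_eq_mul]
    simp [Finset.sum_boole, cnt, mul_comm]
  rw [h2]

def Fam (m : ℕ) (G : SimpleGraph (Fin m)) : Prop :=
  (∀ (i : ℕ) (h : i + 1 < m), G.Adj ⟨i, by omega⟩ ⟨i+1, h⟩) ∧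
  ∀ (i : ℕ) (h : i < m), 2 ≤ i → ∃ j : Fin m, (j : ℕ) + 2 ≤ i ∧ G.Adj j ⟨i, h⟩

lemma Fam.mono {m : ℕ} {G G' : SimpleGraph (Fin m)} (h : Fam m G) (hle : G ≤ G') :
    Fam m G' :=
  ⟨fun i h' => hle (h.1 i h'), fun i h' h2 =>
    (h.2 i h' h2).imp fun _ hj => ⟨hj.1, hle hj.2⟩⟩

lemma Fam.restrict {m : ℕ} {G : SimpleGraph (Fin (m+1))} (h : Fam (m+1) G) :
    Fam m (G.comap Fin.castSucc) := by
  constructor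
  · intro i hi
    have := h.1 i (by omega)
    show G.Adj (Fin.castSucc ⟨i, by omega⟩) (Fin.castSucc ⟨i+1, hi⟩)
    convert this using 2 <;> rfl
  · intro i hi h2
    obtain ⟨j, hj1, hj2⟩ := h.2 i (by omega) h2
    refine ⟨⟨j, by omega⟩, by simpa using hj1, ?_⟩
    show G.Adj (Fin.castSucc ⟨j, by omega⟩) (Fin.castSucc ⟨i, hi⟩)
    convert hj2 using 2 <;> rfl

lemma cnt_fin2 (G : SimpleGraph (Fin 2)) (h01 : G.Adj ⟨0, by omega⟩ ⟨1, by omega⟩) (k : ℕ) :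
    cnt G k + k = k * k := by
  have hpcs : pcs G k = Finset.univ.filter
      fun f => f ⟨0, Nat.zero_lt_two⟩ ≠ f ⟨1, Nat.one_lt_two⟩ := by
    ext f
    simp only [mem_pcs, Finset.mem_filter, Finset.mem_univ, true_and]
    constructor
    · intro h; exact h _ _ h01
    · intro h i j hij
      fin_cases i <;> fin_cases j
      · exact absurd hij (G.loopless.irrefl _)
      · exact h
      · exact fun e => h e.symm
      · exact absurd hij (G.loopless.irrefl _)
  have hb : (Finset.univ.filter fun f : Fin 2 → Fin k =>
      ¬ f ⟨0, Nat.zero_lt_two⟩ ≠ f ⟨1, Nat.one_lt_two⟩).card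
      = (Finset.univ : Finset (Fin k)).card := by
    refine Finset.card_nbij' (fun f => f ⟨0, Nat.zero_lt_two⟩) (fun c _ => c) ?_ ?_ ?_ ?_
    · intro f _; simp
    · intro c _
      simp only [Finset.mem_coe, Finset.mem_filter, Finset.mem_univ, true_and, not_not]
    · intro f hf
      simp only [Finset.mem_coe, Finset.mem_filter, Finset.mem_univ, true_and, not_not] at hf
      funext x
      fin_cases x
      · rfl
      · exact hf
    · intro c _; rfl
  have hconst : (Finset.univ.filter fun f : Fin 2 → Fin k =>
      ¬ f ⟨0, Nat.zero_lt_two⟩ ≠ f ⟨1, Nat.one_lt_two⟩).card = k := by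
    rw [hb]; simp
  have htot := Finset.card_filter_add_card_filter_not
    (s := (Finset.univ : Finset (Fin 2 → Fin k)))
    (fun f => f ⟨0, Nat.zero_lt_two⟩ ≠ f ⟨1, Nat.one_lt_two⟩)
  rw [hconst, Finset.card_univ] at htot
  have hcu : Fintype.card (Fin 2 → Fin k) = k * k := by
    rw [Fintype.card_fun]; simp [sq]
  rw [hcu] at htot
  rw [cnt, hpcs]
  exact htot

open Polynomial in
lemma main : ∀ (N : ℕ), ∀ (m : ℕ) (G : SimpleGraph (Fin (m+2))), Fam (m+2) G →
    (m+2)*(m+2) + (Finset.univ.filter fun w => G.Adj (Fin.last (m+1)) w).card ≤ N →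
    ∃ Q : Polynomial ℝ, (∀ k : ℕ, Q.eval (k : ℝ) = cnt G k) ∧
      ∀ x : ℝ, 1 < x → x < 2 → 0 < (-1)^m * Q.eval x := by
  intro N
  induction N using Nat.strong_induction_on with
  | _ N IH =>
  rintro m G hF hN
  match m, G, hF, hN with
  | 0, G, hF, hN =>
    have h01 : G.Adj ⟨0, by omega⟩ ⟨1, by omega⟩ := hF.1 0 (by omega)
    refine ⟨X^2 - X, ?_, ?_⟩
    · intro k
      have hc := cnt_fin2 G h01 k
      have : (cnt G k : ℝ) + k = k * k := by exact_mod_cast congrArg (Nat.cast : ℕ → ℝ) hc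
      simp only [eval_sub, eval_pow, eval_X]
      nlinarith [this]
    · intro x h1 h2
      simp only [pow_zero, one_mul, eval_sub, eval_pow, eval_X]
      nlinarith
  | (m'+1), G, hF, hN =>
    set u : Fin (m'+3) := Fin.last (m'+2) with hu
    have hpadj : G.Adj ⟨m'+1, by omega⟩ u := hF.1 (m'+1) (by omega)
    obtain ⟨b, hb2, hbadj⟩ := hF.2 (m'+2) (by omega) (by omega)
    have hbv : (b : ℕ) ≤ m' := by omega
    by_cases hC : ∃ c : Fin (m'+3), G.Adj u c ∧ (c : ℕ) ≠ m'+1 ∧ c ≠ b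
    · -- deletion/contraction on an extra edge at the last vertex
      obtain ⟨c, hcadj, hcp, hcb⟩ := hC
      have hcu : (c : ℕ) ≠ m'+2 := by
        intro e
        exact G.loopless.irrefl u (by rwa [show c = u from Fin.ext e] at hcadj)
      set D := G.deleteEdges {s(u, c)} with hDdef
      have hDadj : ∀ x y, D.Adj x y ↔ G.Adj x y ∧ ¬ s(x,y) = s(u,c) := by
        intro x y; simp [hDdef, SimpleGraph.deleteEdges_adj]
      have hFD : Fam (m'+3) D := by
        constructor
        · intro i hi
          refine (hDadj _ _).mpr ⟨hF.1 i hi, ?_⟩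
          rw [Sym2.eq_iff]
          rintro (⟨h1, h2⟩ | ⟨h1, h2⟩)
          · have e1 := congrArg Fin.val h1
            simp [hu, Fin.last] at e1
            omega
          · have e1 := congrArg Fin.val h1
            have e2 := congrArg Fin.val h2
            simp [hu, Fin.last] at e1 e2
            omega
        · intro i hi h2
          by_cases hi2 : i = m'+2
          · subst hi2
            refine ⟨b, hb2, (hDadj _ _).mpr ⟨hbadj, ?_⟩⟩
            rw [Sym2.eq_iff]
            rintro (⟨h1, h2⟩ | ⟨h1, h2⟩)
            · have e1 := congrArg Fin.val h1
              simp [hu, Fin.last] at e1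
              omega
            · exact hcb (h1 ▸ rfl)
          · obtain ⟨j, hj1, hj2⟩ := hF.2 i hi h2
            refine ⟨j, hj1, (hDadj _ _).mpr ⟨hj2, ?_⟩⟩
            rw [Sym2.eq_iff]
            rintro (⟨h1, h2⟩ | ⟨h1, h2⟩)
            · have e1 := congrArg Fin.val h1
              simp [hu, Fin.last] at e1
              omega
            · have e2 := congrArg Fin.val h2
              simp [hu, Fin.last] at e2
              omega
        -- degree drops
      have hfe : (Finset.univ.filter fun w => D.Adj u w)
          = (Finset.univ.filter fun w => G.Adj u w).erase c := by
        ext w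
        simp only [Finset.mem_filter, Finset.mem_univ, true_and, Finset.mem_erase]
        rw [hDadj, Sym2.eq_iff]
        constructor
        · rintro ⟨hw, hne⟩
          refine ⟨fun e => hne (Or.inl ⟨rfl, e⟩), hw⟩
        · rintro ⟨hne, hw⟩
          refine ⟨hw, ?_⟩
          rintro (⟨h1, h2⟩ | ⟨h1, h2⟩)
          · exact hne h2
          · have e1 := congrArg Fin.val h1
            simp [hu, Fin.last] at e1
            omega
      have hcmem : c ∈ Finset.univ.filter fun w => G.Adj u w := by simp [hcadj]
      have hdd : (Finset.univ.filter fun w => D.Adj u w).card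
          < (Finset.univ.filter fun w => G.Adj u w).card := by
        rw [hfe]; exact Finset.card_erase_lt_of_mem hcmem
      obtain ⟨QD, hQDev, hQDsgn⟩ := IH
        ((m'+1+2)*(m'+1+2) + (Finset.univ.filter fun w => D.Adj u w).card)
        (by nlinarith [hdd, hN]) (m'+1) D hFD (by simp [hu]; exact Finset.card_le_card (fun w hw => by simpa using hw))
      set c0 : Fin (m'+2) := ⟨(c : ℕ), by omega⟩ with hc0def
      have hc0 : c0.castSucc = c := by
        apply Fin.ext; rfl
      have hnt : ¬ D.Adj (Fin.last (m'+2)) c0.castSucc := by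
        rw [hc0]
        intro h
        exact ((hDadj _ _).mp h).2 rfl
      set Mg := mrg c0 D with hMgdef
      have hFMg : Fam (m'+2) Mg := (hFD.restrict).mono (comap_le_mrg c0 D)
      obtain ⟨QM, hQMev, hQMsgn⟩ := IH
        ((m'+2)*(m'+2) + (Finset.univ.filter fun w => Mg.Adj (Fin.last (m'+1)) w).card)
        (by
          have : (Finset.univ.filter fun w => Mg.Adj (Fin.last (m'+1)) w).card
              ≤ m'+2 := le_trans (Finset.card_filter_le _ _) (by simp)
          nlinarith [hN]) m' Mg hFMg le_rfl
      have hcnt : ∀ k, cnt D k = cnt G k + cnt Mg k := by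
        intro k
        have h1 := del_count G c hcadj k
        have h2 := mrg_count c0 D hnt k
        rw [hc0] at h2
        rw [h1, h2]
      refine ⟨QD - QM, ?_, ?_⟩
      · intro k
        have := hcnt k
        have hcast : (cnt D k : ℝ) = (cnt G k : ℝ) + (cnt Mg k : ℝ) := by exact_mod_cast this
        simp only [Polynomial.eval_sub, hQDev, hQMev]
        linarith
      · intro x h1 h2
        have s1 := hQDsgn x h1 h2
        have s2 := hQMsgn x h1 h2
        simp only [Polynomial.eval_sub]
        have e1 : (-1:ℝ)^(m'+1) = (-1)^m' * (-1) := pow_succ _ _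
        rw [e1] at s1 ⊢
        nlinarith [s1, s2]
    · -- last vertex has exactly two neighbours
      push_neg at hC
      set a : Fin (m'+2) := Fin.last (m'+1) with hadef
      set b0 : Fin (m'+2) := ⟨(b : ℕ), by omega⟩ with hb0def
      have hca : a.castSucc = (⟨m'+1, by omega⟩ : Fin (m'+3)) := by apply Fin.ext; rfl
      have hcb0 : b0.castSucc = b := by apply Fin.ext; rfl
      have hnbr : ∀ w, G.Adj u w ↔ (w = a.castSucc ∨ w = b0.castSucc) := by
        intro w
        constructor
        · intro h
          by_cases hw : (w : ℕ) = m'+1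
          · left; apply Fin.ext; rw [hca]; exact hw
          · right; rw [hcb0]; exact hC w h hw
        · rintro (rfl | rfl)
          · rw [hca]; exact hpadj.symm
          · rw [hcb0]; exact hbadj.symm
      set H := G.comap (Fin.castSucc : Fin (m'+2) → Fin (m'+3)) with hHdef
      have hFH : Fam (m'+2) H := hF.restrict
      obtain ⟨QH, hQHev, hQHsgn⟩ := IH
        ((m'+2)*(m'+2) + (Finset.univ.filter fun w => H.Adj (Fin.last (m'+1)) w).card)
        (by
          have : (Finset.univ.filter fun w => H.Adj (Fin.last (m'+1)) w).card
              ≤ m'+2 := le_trans (Finset.card_filter_le _ _) (by simp)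
          nlinarith [hN]) m' H hFH le_rfl
      have hext := ext_count G a b0 hnbr
      rw [← hHdef] at hext
      by_cases hadj : H.Adj a b0
      · -- the two neighbours are adjacent
        have hM : ∀ k, ((pcs H k).filter fun g => g a = g b0) = ∅ := by
          intro k
          rw [Finset.filter_eq_empty_iff]
          intro g hg
          exact (mem_pcs.mp hg) a b0 hadj
        refine ⟨(Polynomial.X - Polynomial.C 2) * QH, ?_, ?_⟩
        · intro k
          have he := hext k
          rw [hM k] at he
          simp only [Finset.card_empty, add_zero] at he
          have hcast : (cnt G k : ℝ) + 2 * (cnt H k : ℝ) = (k : ℝ) * (cnt H k : ℝ) := by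
            exact_mod_cast he
          simp only [Polynomial.eval_mul, Polynomial.eval_sub, Polynomial.eval_X,
            Polynomial.eval_C, hQHev]
          linarith
        · intro x h1 h2
          have s1 := hQHsgn x h1 h2
          simp only [Polynomial.eval_mul, Polynomial.eval_sub, Polynomial.eval_X,
            Polynomial.eval_C]
          have key : (-1:ℝ)^(m'+1) * ((x - 2) * QH.eval x)
              = (2 - x) * ((-1)^m' * QH.eval x) := by
            rw [pow_succ]; ring
          rw [key]
          exact mul_pos (by linarith) s1
      · -- the two neighbours are not adjacent: contract them
        have hm0 : m' ≠ 0 := by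
          intro e
          subst e
          apply hadj
          have hb00 : b0 = ⟨0, by omega⟩ := by
            apply Fin.ext
            simp [hb0def]
            omega
          have := (hFH.1 0 (by omega)).symm
          rw [hb00]
          exact this
        obtain ⟨m'', rfl⟩ : ∃ m'', m' = m'' + 1 := ⟨m' - 1, by omega⟩
        set b0' : Fin (m''+2) := ⟨(b : ℕ), by omega⟩ with hb0'def
        have hcb0' : b0'.castSucc = b0 := by apply Fin.ext; rfl
        have hlaa : Fin.last (m''+2) = a := by apply Fin.ext; rfl
        have hnt : ¬ H.Adj (Fin.last (m''+2)) b0'.castSucc := by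
          rw [hcb0', hlaa]; exact hadj
        set Mg := mrg b0' H with hMgdef
        have hFMg : Fam (m''+2) Mg := (hFH.restrict).mono (comap_le_mrg b0' H)
        obtain ⟨QM, hQMev, hQMsgn⟩ := IH
          ((m''+2)*(m''+2) + (Finset.univ.filter fun w => Mg.Adj (Fin.last (m''+1)) w).card)
          (by
            have : (Finset.univ.filter fun w => Mg.Adj (Fin.last (m''+1)) w).card
                ≤ m''+2 := le_trans (Finset.card_filter_le _ _) (by simp)
            nlinarith [hN]) m'' Mg hFMg le_rfl
        have hM : ∀ k, ((pcs H k).filter fun g => g a = g b0).card = cnt Mg k := by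
          intro k
          have := mrg_count b0' H hnt k
          rw [hcb0', hlaa] at this
          exact this
        refine ⟨(Polynomial.X - Polynomial.C 2) * QH + QM, ?_, ?_⟩
        · intro k
          have he := hext k
          rw [hM k] at he
          have hcast : (cnt G k : ℝ) + 2 * (cnt H k : ℝ)
              = (k : ℝ) * (cnt H k : ℝ) + (cnt Mg k : ℝ) := by exact_mod_cast he
          simp only [Polynomial.eval_add, Polynomial.eval_mul, Polynomial.eval_sub,
            Polynomial.eval_X, Polynomial.eval_C, hQHev, hQMev]
          linarith
        · intro x h1 h2
          have s1 := hQHsgn x h1 h2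
          have s2 := hQMsgn x h1 h2
          simp only [Polynomial.eval_add, Polynomial.eval_mul, Polynomial.eval_sub,
            Polynomial.eval_X, Polynomial.eval_C]
          have key : (-1:ℝ)^(m''+1+1) * ((x - 2) * QH.eval x + QM.eval x)
              = (2 - x) * ((-1)^(m''+1) * QH.eval x) + (-1)^m'' * QM.eval x := by
            ring
          rw [key]
          have : 0 < (2 - x) * ((-1:ℝ)^(m''+1) * QH.eval x) := mul_pos (by linarith) s1
          linarith

lemma poly_ext (P Q : Polynomial ℝ) (h : ∀ k : ℕ, P.eval (k : ℝ) = Q.eval (k : ℝ)) : P = Q := by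
  have hz : P - Q = 0 := by
    apply Polynomial.eq_zero_of_infinite_isRoot
    apply Set.infinite_of_injective_forall_mem (f := fun k : ℕ => (k : ℝ))
      (hi := fun a b hab => Nat.cast_injective hab)
    intro k
    simp [Polynomial.IsRoot, h k]
  exact sub_eq_zero.mp hz

lemma numColorings_eq_cnt (V : Type) [Fintype V] (G : SimpleGraph V) (n : ℕ)
    (v : Fin n → V) (hbij : Function.Bijective v) (k : ℕ) :
    numColorings G k = cnt (G.comap v) k := by
  rw [cnt_eq_nat_card, numColorings]
  apply Nat.card_congr
  apply Equiv.symm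
  let ev : Fin n ≃ V := Equiv.ofBijective v hbij
  have hev : ∀ z, v (ev.symm z) = z := fun z => ev.apply_symm_apply z
  refine Equiv.subtypeEquiv (Equiv.arrowCongr ev (Equiv.refl (Fin k))) ?_
  intro g
  constructor
  · intro hp u w huw
    have : (G.comap v).Adj (ev.symm u) (ev.symm w) := by
      show G.Adj (v (ev.symm u)) (v (ev.symm w))
      rw [hev, hev]; exact huw
    exact hp _ _ this
  · intro hq i j hij
    have := hq (v i) (v j) hij
    simpa [Equiv.arrowCongr, ev] using this

end DongKoh

/-- (Dong & Koh) Let `G` be a finite simple graph with `n` vertices admitting a hamiltonian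
path `v 0, v 1, …, v (n-1)` such that every vertex `v i` with `i ≥ 2` has at least one
neighbour among `v 0, …, v (i-2)` (hence at least two neighbours among its predecessors,
including `v (i-1)`).  Then the chromatic polynomial of `G` has no real root in the open
interval `(1, 2)`. -/
theorem no_chromatic_root_of_hamiltonian_path_with_back_neighbours {V : Type} [Fintype V]
    (G : SimpleGraph V) (n : ℕ) (hn : n = Fintype.card V)
    (v : Fin n → V) (hbij : Function.Bijective v)
    (hpath : ∀ (i : ℕ) (h : i + 1 < n), G.Adj (v ⟨i, by omega⟩) (v ⟨i + 1, h⟩))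
    (hback : ∀ (i : ℕ) (h : i < n), 2 ≤ i →
      ∃ j : Fin n, (j : ℕ) + 2 ≤ i ∧ G.Adj (v j) (v ⟨i, h⟩))
    (P : Polynomial ℝ) (hP : IsChromaticPolynomial G P) :
    ∀ x : ℝ, 1 < x → x < 2 → P.eval x ≠ 0 := by
  classical
  intro x hx1 hx2
  match n, hn, v, hbij, hpath, hback with
  | 0, hn, v, hbij, hpath, hback =>
    haveI : IsEmpty V := Fintype.card_eq_zero_iff.mp hn.symm
    have hnum : ∀ k : ℕ, numColorings G k = 1 := by
      intro k
      haveI : Unique {f : V → Fin k // ∀ u w, G.Adj u w → f u ≠ f w} :=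
        ⟨⟨⟨fun u => isEmptyElim u, fun u _ _ => isEmptyElim u⟩⟩,
          fun a => Subtype.ext (funext fun u => isEmptyElim u)⟩
      exact Nat.card_unique
    have hPC : P = Polynomial.C 1 := by
      apply DongKoh.poly_ext
      intro k
      rw [hP k, hnum k]
      simp
    rw [hPC]
    simp
  | 1, hn, v, hbij, hpath, hback =>
    obtain ⟨w, hw⟩ := Fintype.card_eq_one_iff.mp hn.symm
    have hnoadj : ∀ u w' : V, ¬ G.Adj u w' := by
      intro u w' h
      rw [hw u, hw w'] at h
      exact G.loopless.irrefl _ h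
    haveI : Unique V := ⟨⟨w⟩, hw⟩
    have hnum : ∀ k : ℕ, numColorings G k = k := by
      intro k
      rw [numColorings,
        Nat.card_congr (Equiv.subtypeUnivEquiv (fun f => fun u w' h => absurd h (hnoadj u w'))),
        Nat.card_congr (Equiv.funUnique V (Fin k)), Nat.card_eq_fintype_card, Fintype.card_fin]
    have hPX : P = Polynomial.X := by
      apply DongKoh.poly_ext
      intro k
      rw [hP k, hnum k]
      simp
    rw [hPX]
    simp
    linarith
  | (n'+2), hn, v, hbij, hpath, hback =>
    set G0 : SimpleGraph (Fin (n'+2)) := G.comap v with hG0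
    have hFam : DongKoh.Fam (n'+2) G0 := by
      constructor
      · intro i hi
        exact hpath i hi
      · intro i hi h2
        obtain ⟨j, hj1, hj2⟩ := hback i hi h2
        exact ⟨j, hj1, hj2⟩
    obtain ⟨Q, hQev, hQsgn⟩ := DongKoh.main
      ((n'+2)*(n'+2) + (Finset.univ.filter fun w => G0.Adj (Fin.last (n'+1)) w).card)
      n' G0 hFam le_rfl
    have hPQ : P = Q := by
      apply DongKoh.poly_ext
      intro k
      rw [hP k, DongKoh.numColorings_eq_cnt V G (n'+2) v hbij k, ← hG0, hQev k]
    rw [hPQ]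
    intro h0
    have := hQsgn x hx1 hx2
    rw [h0] at this
    simp at this
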